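/- Let M be a unital C*-algebra, let w ∈ M satisfy w w* w = w, and set e := w* w. Let p, q ∈ M be projections (self-adjoint idempotents) such that e p = p e and w* q w = e p. Then w w* commutes with q: (w w*) q = q (w w*). -/
import Mathlib


/-- In a unital C*-algebra, if `w` is a partial isometry with
`e := w*w`, and `p`, `q` are projections with `e p = p e` and `w* q w = e p`,
then `w w*` commutes with `q`. -/
theorem partial_isometry_range_projection_commutes
    {M : Type*} [NormedRing M] [StarRing M] [CStarRing M] [CompleteSpace M]
    [NormedAlgebra ℂ M] [StarModule ℂ M]
    (w p q : M)
    (hw : w * star w * w = w)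
    (hp : star p = p) (hp2 : p * p = p)
    (hq : star q = q) (hq2 : q * q = q)
    (hep : (star w * w) * p = p * (star w * w))
    (hqwp : star w * q * w = (star w * w) * p) :
    (w * star w) * q = q * (w * star w) := by
  have hff : (w * star w) * (w * star w) = w * star w := by
    calc (w * star w) * (w * star w) = (w * star w * w) * star w := by noncomm_ring
    _ = w * star w := by rw [hw]
  have hpep : p * (star w * w) * p = (star w * w) * p := by
    calc p * (star w * w) * p = ((star w * w) * p) * p := by rw [← hep]
    _ = (star w * w) * (p * p) := by noncomm_ring
    _ = (star w * w) * p := by rw [hp2]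
  have key1 : (w * star w) * q * (w * star w) = w * p * star w := by
    calc (w * star w) * q * (w * star w)
        = w * (star w * q * w) * star w := by noncomm_ring
    _ = w * ((star w * w) * p) * star w := by rw [hqwp]
    _ = (w * star w * w) * p * star w := by noncomm_ring
    _ = w * p * star w := by rw [hw]
  have key2 : (w * p * star w) * (q * (w * star w)) = w * p * star w := by
    calc (w * p * star w) * (q * (w * star w))
        = w * p * (star w * q * w) * star w := by noncomm_ring
    _ = w * p * ((star w * w) * p) * star w := by rw [hqwp]
    _ = w * (p * (star w * w) * p) * star w := by noncomm_ring
    _ = w * ((star w * w) * p) * star w := by rw [hpep]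
    _ = (w * star w * w) * p * star w := by rw [← mul_assoc, ← mul_assoc]
    _ = w * p * star w := by rw [hw]
  have h1 : ((w * star w) * q) * (q * (w * star w)) = w * p * star w := by
    calc ((w * star w) * q) * (q * (w * star w))
        = (w * star w) * (q * q) * (w * star w) := by noncomm_ring
    _ = (w * star w) * q * (w * star w) := by rw [hq2]
    _ = w * p * star w := key1
  have h3 : ((w * star w) * q * (w * star w)) * (q * (w * star w)) = w * p * star w := by
    rw [key1]; exact key2
  have h2 : ((w * star w) * q) * ((w * star w) * q * (w * star w)) = w * p * star w := by
    calc ((w * star w) * q) * ((w * star w) * q * (w * star w))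
        = ((w * star w) * q * (w * star w)) * (q * (w * star w)) := by noncomm_ring
    _ = w * p * star w := h3
  have h4 : ((w * star w) * q * (w * star w)) * ((w * star w) * q * (w * star w))
      = w * p * star w := by
    calc ((w * star w) * q * (w * star w)) * ((w * star w) * q * (w * star w))
        = ((w * star w) * q) * ((w * star w) * (w * star w)) * (q * (w * star w)) := by
          noncomm_ring
    _ = ((w * star w) * q) * (w * star w) * (q * (w * star w)) := by rw [hff]
    _ = w * p * star w := h3
  have hxs : star (q * (w * star w) - (w * star w) * q * (w * star w))
      = (w * star w) * q - (w * star w) * q * (w * star w) := by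
    simp [star_sub, star_mul, hq, mul_assoc]
  have hx : q * (w * star w) - (w * star w) * q * (w * star w) = 0 := by
    rw [← CStarRing.star_mul_self_eq_zero_iff, hxs, sub_mul, mul_sub, mul_sub,
      h1, h2, h3, h4]
    abel
  have hqf : q * (w * star w) = (w * star w) * q * (w * star w) := by
    rwa [sub_eq_zero] at hx
  have hfq : (w * star w) * q = (w * star w) * q * (w * star w) := by
    have h := congrArg star hqf
    simpa [star_mul, hq, mul_assoc] using h
  rw [hfq, hqf]
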